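/- Let Ω ⊂ ℝ² be open and connected and θ : Ω → ℝ be C¹ such that both ∂₁(cos θ) − ∂₂(sin θ) and ∂₁(sin θ) + ∂₂(cos θ) equal prescribed constants a, b respectively, and also ∂₂(cos θ) and ∂₁(cos θ) (resp. of sin θ) satisfy curl-type constancy: ∂₁(sin θ) − ∂₂(cos θ) = c and ∂₁(cos θ) + ∂₂(sin θ) = d for constants c, d. If (a,b,c,d) ≠ (0,0,0,0), then no such θ exists; equivalently, any C¹ function θ on connected Ω with all four of these expressions constant must have all four constants equal to zero. -/

import Mathlib

noncomputable def pd2 (j : Fin 2) (f : (Fin 2 → ℝ) → ℝ) (x : Fin 2 → ℝ) : ℝ :=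
  fderiv ℝ f x (Pi.single j 1)

private lemma aux_vanish (Ω : Set (Fin 2 → ℝ)) (hΩ : IsOpen Ω) (hne : Ω.Nonempty)
    (θ : (Fin 2 → ℝ) → ℝ) (hθ : ContDiffOn ℝ 1 θ Ω) (j : Fin 2) (A B : ℝ)
    (hA : ∀ x ∈ Ω, Real.cos (θ x) * fderiv ℝ θ x (Pi.single j 1) = A)
    (hB : ∀ x ∈ Ω, Real.sin (θ x) * fderiv ℝ θ x (Pi.single j 1) = B) :
    A = 0 ∧ B = 0 := by
  have hdiff : ∀ x ∈ Ω, DifferentiableAt ℝ θ x := fun x hx =>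
    (hθ.contDiffAt (hΩ.mem_nhds hx)).differentiableAt one_ne_zero
  have hcosF : ∀ x ∈ Ω, HasFDerivAt (fun y => Real.cos (θ y))
      ((-Real.sin (θ x)) • fderiv ℝ θ x) x := fun x hx =>
    (Real.hasDerivAt_cos (θ x)).comp_hasFDerivAt x (hdiff x hx).hasFDerivAt
  have hsinF : ∀ x ∈ Ω, HasFDerivAt (fun y => Real.sin (θ y))
      ((Real.cos (θ x)) • fderiv ℝ θ x) x := fun x hx =>
    (Real.hasDerivAt_sin (θ x)).comp_hasFDerivAt x (hdiff x hx).hasFDerivAt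
  by_contra hcon
  have hP : 0 < A ^ 2 + B ^ 2 := by
    rcases not_and_or.mp hcon with h | h <;> positivity
  -- cos² θ is constant on Ω
  have hcos2 : ∀ x ∈ Ω, Real.cos (θ x) * Real.cos (θ x) = A ^ 2 / (A ^ 2 + B ^ 2) := by
    intro x hx
    have h1 := hA x hx
    have h2 := hB x hx
    have hpy := Real.sin_sq_add_cos_sq (θ x)
    set p := fderiv ℝ θ x (Pi.single j 1) with hp
    have hA2 : Real.cos (θ x) ^ 2 * p ^ 2 = A ^ 2 := by rw [← h1]; ring
    have hB2 : Real.sin (θ x) ^ 2 * p ^ 2 = B ^ 2 := by rw [← h2]; ring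
    have hpp : p ^ 2 = A ^ 2 + B ^ 2 := by
      rw [← hA2, ← hB2]; nlinarith [hpy]
    rw [eq_div_iff (ne_of_gt hP), ← hpp]
    nlinarith [hA2, hpp, hpy]
  -- differentiating the constant cos²θ gives sin·cos·∂θ = 0
  have hfz : ∀ x ∈ Ω, Real.sin (θ x) * Real.cos (θ x) * fderiv ℝ θ x (Pi.single j 1) = 0 := by
    intro x hx
    have hmul : HasFDerivAt (fun y => Real.cos (θ y) * Real.cos (θ y))
        (Real.cos (θ x) • ((-Real.sin (θ x)) • fderiv ℝ θ x)
          + Real.cos (θ x) • ((-Real.sin (θ x)) • fderiv ℝ θ x)) x :=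
      (hcosF x hx).mul (hcosF x hx)
    have hconst : fderiv ℝ (fun y => Real.cos (θ y) * Real.cos (θ y)) x = 0 := by
      have hev : (fun y => Real.cos (θ y) * Real.cos (θ y))
          =ᶠ[nhds x] (fun _ => A ^ 2 / (A ^ 2 + B ^ 2)) :=
        Filter.eventuallyEq_of_mem (hΩ.mem_nhds hx) (fun y hy => hcos2 y hy)
      rw [hev.fderiv_eq, fderiv_fun_const]
      rfl
    have heq := hmul.fderiv
    rw [hconst] at heq
    have happ := congrArg (fun L => L (Pi.single j 1)) heq
    simp only [ContinuousLinearMap.zero_apply, ContinuousLinearMap.add_apply,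
      ContinuousLinearMap.smul_apply, smul_eq_mul] at happ
    nlinarith [happ]
  obtain ⟨x₀, hx₀⟩ := hne
  rcases not_and_or.mp hcon with hA0 | hB0
  · -- A ≠ 0 : then sin θ ≡ 0 on Ω, so ∂(sin θ) = 0, contradicting cos·∂θ = A ≠ 0
    have hs0 : ∀ x ∈ Ω, Real.sin (θ x) = 0 := by
      intro x hx
      have h1 := hfz x hx
      have h2 := hA x hx
      have h3 : Real.sin (θ x) * A = 0 := by rw [← h2]; ring_nf; ring_nf at h1; linarith
      exact (mul_eq_zero.mp h3).resolve_right hA0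
    have hev : (fun y => Real.sin (θ y)) =ᶠ[nhds x₀] (fun _ => (0 : ℝ)) :=
      Filter.eventuallyEq_of_mem (hΩ.mem_nhds hx₀) (fun y hy => hs0 y hy)
    have hz : fderiv ℝ (fun y => Real.sin (θ y)) x₀ = 0 := by
      rw [hev.fderiv_eq, fderiv_fun_const]; rfl
    have heq := (hsinF x₀ hx₀).fderiv
    rw [hz] at heq
    have happ := congrArg (fun L => L (Pi.single j 1)) heq.symm
    simp only [ContinuousLinearMap.zero_apply, ContinuousLinearMap.smul_apply,
      smul_eq_mul] at happ
    exact hA0 ((hA x₀ hx₀).symm.trans happ)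
  · -- B ≠ 0 : then cos θ ≡ 0 on Ω, so ∂(cos θ) = 0, contradicting -sin·∂θ = -B ≠ 0
    have hc0 : ∀ x ∈ Ω, Real.cos (θ x) = 0 := by
      intro x hx
      have h1 := hfz x hx
      have h2 := hB x hx
      have h3 : Real.cos (θ x) * B = 0 := by rw [← h2]; ring_nf; ring_nf at h1; linarith
      exact (mul_eq_zero.mp h3).resolve_right hB0
    have hev : (fun y => Real.cos (θ y)) =ᶠ[nhds x₀] (fun _ => (0 : ℝ)) :=
      Filter.eventuallyEq_of_mem (hΩ.mem_nhds hx₀) (fun y hy => hc0 y hy)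
    have hz : fderiv ℝ (fun y => Real.cos (θ y)) x₀ = 0 := by
      rw [hev.fderiv_eq, fderiv_fun_const]; rfl
    have heq := (hcosF x₀ hx₀).fderiv
    rw [hz] at heq
    have happ := congrArg (fun L => L (Pi.single j 1)) heq.symm
    simp only [ContinuousLinearMap.zero_apply, ContinuousLinearMap.smul_apply,
      smul_eq_mul] at happ
    have : Real.sin (θ x₀) * fderiv ℝ θ x₀ (Pi.single j 1) = 0 := by linarith [happ]
    exact hB0 ((hB x₀ hx₀).symm.trans this)

/-- Algebraic core of Acharya's computation: if the four listed first-order combinations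
of `cos θ` and `sin θ` are constant on a connected open `Ω ⊆ ℝ²`, all four constants
vanish. -/
theorem stmt15 (Ω : Set (Fin 2 → ℝ)) (hΩ : IsOpen Ω) (hconn : IsConnected Ω)
    (θ : (Fin 2 → ℝ) → ℝ) (hθ : ContDiffOn ℝ 1 θ Ω)
    (a b c d : ℝ)
    (ha : ∀ x ∈ Ω, pd2 0 (fun y => Real.cos (θ y)) x - pd2 1 (fun y => Real.sin (θ y)) x = a)
    (hb : ∀ x ∈ Ω, pd2 0 (fun y => Real.sin (θ y)) x + pd2 1 (fun y => Real.cos (θ y)) x = b)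
    (hc : ∀ x ∈ Ω, pd2 0 (fun y => Real.sin (θ y)) x - pd2 1 (fun y => Real.cos (θ y)) x = c)
    (hd : ∀ x ∈ Ω, pd2 0 (fun y => Real.cos (θ y)) x + pd2 1 (fun y => Real.sin (θ y)) x = d) :
    a = 0 ∧ b = 0 ∧ c = 0 ∧ d = 0 := by
  have hne : Ω.Nonempty := hconn.nonempty
  have hdiff : ∀ x ∈ Ω, DifferentiableAt ℝ θ x := fun x hx =>
    (hθ.contDiffAt (hΩ.mem_nhds hx)).differentiableAt one_ne_zero
  have hcosF : ∀ x ∈ Ω, HasFDerivAt (fun y => Real.cos (θ y))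
      ((-Real.sin (θ x)) • fderiv ℝ θ x) x := fun x hx =>
    (Real.hasDerivAt_cos (θ x)).comp_hasFDerivAt x (hdiff x hx).hasFDerivAt
  have hsinF : ∀ x ∈ Ω, HasFDerivAt (fun y => Real.sin (θ y))
      ((Real.cos (θ x)) • fderiv ℝ θ x) x := fun x hx =>
    (Real.hasDerivAt_sin (θ x)).comp_hasFDerivAt x (hdiff x hx).hasFDerivAt
  have hpc : ∀ x ∈ Ω, ∀ j : Fin 2, pd2 j (fun y => Real.cos (θ y)) x
      = -Real.sin (θ x) * fderiv ℝ θ x (Pi.single j 1) := by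
    intro x hx j
    unfold pd2
    rw [(hcosF x hx).fderiv]
    simp
  have hps : ∀ x ∈ Ω, ∀ j : Fin 2, pd2 j (fun y => Real.sin (θ y)) x
      = Real.cos (θ x) * fderiv ℝ θ x (Pi.single j 1) := by
    intro x hx j
    unfold pd2
    rw [(hsinF x hx).fderiv]
    simp
  have hA1 : ∀ x ∈ Ω, Real.cos (θ x) * fderiv ℝ θ x (Pi.single 0 1) = (b + c) / 2 := by
    intro x hx
    have h1 := hb x hx; have h2 := hc x hx
    rw [hps x hx 0, hpc x hx 1] at h1 h2
    linarith
  have hB1 : ∀ x ∈ Ω, Real.sin (θ x) * fderiv ℝ θ x (Pi.single 0 1) = -((a + d) / 2) := by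
    intro x hx
    have h1 := ha x hx; have h2 := hd x hx
    rw [hpc x hx 0, hps x hx 1] at h1 h2
    linarith
  have hA2 : ∀ x ∈ Ω, Real.cos (θ x) * fderiv ℝ θ x (Pi.single 1 1) = (d - a) / 2 := by
    intro x hx
    have h1 := ha x hx; have h2 := hd x hx
    rw [hpc x hx 0, hps x hx 1] at h1 h2
    linarith
  have hB2 : ∀ x ∈ Ω, Real.sin (θ x) * fderiv ℝ θ x (Pi.single 1 1) = (c - b) / 2 := by
    intro x hx
    have h1 := hb x hx; have h2 := hc x hx
    rw [hps x hx 0, hpc x hx 1] at h1 h2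
    linarith
  obtain ⟨e1, e2⟩ := aux_vanish Ω hΩ hne θ hθ 0 _ _ hA1 hB1
  obtain ⟨e3, e4⟩ := aux_vanish Ω hΩ hne θ hθ 1 _ _ hA2 hB2
  refine ⟨by linarith, by linarith, by linarith, by linarith⟩
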